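/- Suppose Δ_G is a Garside element of G⁺ satisfying Δ_G ≤_L Δ' and Δ_G ≤_R Δ' for every Garside element Δ' of G⁺, and Δ_H is a Garside element of H⁺ satisfying Δ_H ≤_L Δ'' and Δ_H ≤_R Δ'' for every Garside element Δ'' of H⁺ (i.e. they are the minimal Garside elements). Then (Δ_G, Δ_H) is a Garside element of the monoid G⁺ ⋉ H⁺ and satisfies (Δ_G, Δ_H) ≤_L P and (Δ_G, Δ_H) ≤_R P for every Garside element P of G⁺ ⋉ H⁺ (i.e. it is the minimal Garside element of G⁺ ⋉ H⁺). -/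

import Mathlib

/-- `a` left-divides `b` in the monoid `M`. -/
def dvdL {M : Type*} [Monoid M] (a b : M) : Prop := ∃ c, a * c = b

/-- `a` right-divides `b` in the monoid `M`. -/
def dvdR {M : Type*} [Monoid M] (a b : M) : Prop := ∃ c, c * a = b

/-- `L(a)`, the set of left divisors of `a`. -/
def Lset {M : Type*} [Monoid M] (a : M) : Set M := {x | dvdL x a}

/-- `R(a)`, the set of right divisors of `a`. -/
def Rset {M : Type*} [Monoid M] (a : M) : Set M := {x | dvdR x a}

/-- `a` is an atom: `a ≠ 1` and `a = b * c` implies `b = 1` or `c = 1`. -/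
def IsAtomElt {M : Type*} [Monoid M] (a : M) : Prop :=
  a ≠ 1 ∧ ∀ b c : M, a = b * c → b = 1 ∨ c = 1

/-- `M` is atomic: every element is a finite product of atoms, and the lengths of
expressions of a given element as products of atoms are bounded above. -/
def Atomic (M : Type*) [Monoid M] : Prop :=
  (∀ a : M, ∃ l : List M, (∀ x ∈ l, IsAtomElt x) ∧ l.prod = a) ∧
  (∀ a : M, ∃ N : ℕ, ∀ l : List M, (∀ x ∈ l, IsAtomElt x) → l.prod = a → l.length ≤ N)

/-- `Δ` is a Garside element: `L(Δ) = R(Δ)` and `L(Δ)` generates `M`. -/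
def IsGarsideElt {M : Type*} [Monoid M] (Δ : M) : Prop :=
  Lset Δ = Rset Δ ∧ Submonoid.closure (Lset Δ) = ⊤

/-- `d` is a greatest common lower bound of `a` and `b` with respect to `≤_L`. -/
def IsGlbL {M : Type*} [Monoid M] (a b d : M) : Prop :=
  dvdL d a ∧ dvdL d b ∧ ∀ c : M, dvdL c a → dvdL c b → dvdL c d

/-- `d` is a least common upper bound of `a` and `b` with respect to `≤_L`. -/
def IsLubL {M : Type*} [Monoid M] (a b d : M) : Prop :=
  dvdL a d ∧ dvdL b d ∧ ∀ c : M, dvdL a c → dvdL b c → dvdL d c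

/-- `d` is a greatest common lower bound of `a` and `b` with respect to `≤_R`. -/
def IsGlbR {M : Type*} [Monoid M] (a b d : M) : Prop :=
  dvdR d a ∧ dvdR d b ∧ ∀ c : M, dvdR c a → dvdR c b → dvdR c d

/-- `d` is a least common upper bound of `a` and `b` with respect to `≤_R`. -/
def IsLubR {M : Type*} [Monoid M] (a b d : M) : Prop :=
  dvdR a d ∧ dvdR b d ∧ ∀ c : M, dvdR a c → dvdR b c → dvdR d c

/-- `M` is a Garside monoid: finitely generated, left and right cancellative, atomic,
`≤_L`- and `≤_R`-lattice conditions, and it possesses a Garside element. -/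
def IsGarsideMonoid (M : Type*) [Monoid M] : Prop :=
  (∃ S : Set M, S.Finite ∧ Submonoid.closure S = ⊤) ∧
  (∀ a b c : M, a * b = a * c → b = c) ∧
  (∀ a b c : M, b * a = c * a → b = c) ∧
  Atomic M ∧
  (∀ a b : M, ∃ d, IsGlbL a b d) ∧
  (∀ a b : M, ∃ d, IsLubL a b d) ∧
  (∀ a b : M, ∃ d, IsGlbR a b d) ∧
  (∀ a b : M, ∃ d, IsLubR a b d) ∧
  (∃ Δ : M, IsGarsideElt Δ)

/-- Group-level left divisibility: `a ≤_L b` iff `a⁻¹ * b` is positive. -/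
def gdvdL {G : Type*} [Group G] (P : Submonoid G) (a b : G) : Prop := a⁻¹ * b ∈ P

/-- Group-level right divisibility: `a ≤_R b` iff `b * a⁻¹` is positive. -/
def gdvdR {G : Type*} [Group G] (P : Submonoid G) (a b : G) : Prop := b * a⁻¹ ∈ P

/-- `G` is a Garside group with positive monoid `P` and chosen Garside element `Δ`:
`P` is a Garside monoid, every element of `G` is a fraction `a * b⁻¹` of positive
elements, and `Δ` is a Garside element of `P`. -/
def IsGarsideGroup {G : Type*} [Group G] (P : Submonoid G) (Δ : G) : Prop :=
  IsGarsideMonoid P ∧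
  (∀ g : G, ∃ a b : P, g = (a : G) * (b : G)⁻¹) ∧
  ∃ hΔ : Δ ∈ P, IsGarsideElt (⟨Δ, hΔ⟩ : P)

/-- A right action of the group `G` on the group `H` by group automorphisms,
written `h ↦ ρ.act x h` (the paper's `h^x`). -/
structure RightAction (G H : Type*) [Group G] [Group H] where
  act : G → H → H
  act_mul : ∀ (x : G) (h₁ h₂ : H), act x (h₁ * h₂) = act x h₁ * act x h₂
  act_one : ∀ h : H, act 1 h = h
  act_comp : ∀ (x y : G) (h : H), act (x * y) h = act y (act x h)

namespace RightAction

variable {G H : Type*} [Group G] [Group H]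

lemma act_one' (ρ : RightAction G H) (x : G) : ρ.act x 1 = 1 := by
  have h := ρ.act_mul x 1 1
  rw [one_mul] at h
  exact mul_left_cancel (a := ρ.act x 1) (by rw [mul_one]; exact h.symm)

end RightAction

/-- The semidirect product `G ⋉ H` with multiplication
`(x₁,h₁)·(x₂,h₂) = (x₁·x₂, h₁^{x₂}·h₂)`. -/
structure SDP {G H : Type*} [Group G] [Group H] (ρ : RightAction G H) where
  g : G
  h : H

namespace SDP

variable {G H : Type*} [Group G] [Group H] {ρ : RightAction G H}

protected def gmul (p q : SDP ρ) : SDP ρ := ⟨p.g * q.g, ρ.act q.g p.h * q.h⟩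

protected def gone : SDP ρ := ⟨1, 1⟩

protected def ginv (p : SDP ρ) : SDP ρ := ⟨p.g⁻¹, ρ.act p.g⁻¹ p.h⁻¹⟩

protected lemma gmul_assoc (p q r : SDP ρ) :
    SDP.gmul (SDP.gmul p q) r = SDP.gmul p (SDP.gmul q r) := by
  simp only [SDP.gmul, mk.injEq]
  exact ⟨mul_assoc _ _ _, by rw [ρ.act_mul, ρ.act_comp, mul_assoc]⟩

protected lemma gone_mul (p : SDP ρ) : SDP.gmul SDP.gone p = p := by
  simp only [SDP.gmul, SDP.gone]
  simp [RightAction.act_one']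

protected lemma gmul_one (p : SDP ρ) : SDP.gmul p SDP.gone = p := by
  simp only [SDP.gmul, SDP.gone]
  simp [ρ.act_one]

protected lemma ginv_mul_cancel (p : SDP ρ) : SDP.gmul (SDP.ginv p) p = SDP.gone := by
  simp only [SDP.gmul, SDP.ginv, SDP.gone, mk.injEq]
  rw [← ρ.act_comp]
  simp [ρ.act_one]

/-- The group structure on the semidirect product `G ⋉ H`. -/
instance : Group (SDP ρ) where
  mul := SDP.gmul
  one := SDP.gone
  inv := SDP.ginv
  mul_assoc := SDP.gmul_assoc
  one_mul := SDP.gone_mul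
  mul_one := SDP.gmul_one
  inv_mul_cancel := SDP.ginv_mul_cancel

@[simp] lemma mul_g (p q : SDP ρ) : (p * q).g = p.g * q.g := rfl
@[simp] lemma mul_h (p q : SDP ρ) : (p * q).h = ρ.act q.g p.h * q.h := rfl
@[simp] lemma one_g : (1 : SDP ρ).g = 1 := rfl
@[simp] lemma one_h : (1 : SDP ρ).h = 1 := rfl

end SDP

/-- Membership in the submonoid `G⁺ ⋉ H⁺` of `G ⋉ H`. -/
def SDPpos {G H : Type*} [Group G] [Group H] {ρ : RightAction G H}
    (PG : Submonoid G) (PH : Submonoid H) (p : SDP ρ) : Prop :=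
  p.g ∈ PG ∧ p.h ∈ PH

/-- `p ≤_L q` in `G ⋉ H`: `p · u = q` for some `u ∈ G⁺ ⋉ H⁺`. -/
def SDPdvdL {G H : Type*} [Group G] [Group H] {ρ : RightAction G H}
    (PG : Submonoid G) (PH : Submonoid H) (p q : SDP ρ) : Prop :=
  ∃ u : SDP ρ, SDPpos PG PH u ∧ p * u = q

/-- `p ≤_R q` in `G ⋉ H`: `u · p = q` for some `u ∈ G⁺ ⋉ H⁺`. -/
def SDPdvdR {G H : Type*} [Group G] [Group H] {ρ : RightAction G H}
    (PG : Submonoid G) (PH : Submonoid H) (p q : SDP ρ) : Prop :=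
  ∃ u : SDP ρ, SDPpos PG PH u ∧ u * p = q

section Aux

lemma dvdL_subtype_iff {G : Type*} [Group G] (P : Submonoid G) (x y : P) :
    dvdL x y ↔ (x : G)⁻¹ * (y : G) ∈ P := by
  constructor
  · rintro ⟨c, rfl⟩
    simpa using c.2
  · intro h
    exact ⟨⟨_, h⟩, Subtype.ext (by simp)⟩

lemma dvdR_subtype_iff {G : Type*} [Group G] (P : Submonoid G) (x y : P) :
    dvdR x y ↔ (y : G) * (x : G)⁻¹ ∈ P := by
  constructor
  · rintro ⟨c, rfl⟩
    simpa using c.2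
  · intro h
    exact ⟨⟨_, h⟩, Subtype.ext (by simp)⟩

lemma eq_one_of_mul_eq_one_atomic {M : Type*} [Monoid M] (hat : Atomic M) {c d : M}
    (h : c * d = 1) : c = 1 := by
  obtain ⟨l, hl, hlp⟩ := hat.1 c
  obtain ⟨m, hm, hmp⟩ := hat.1 d
  by_contra hc
  obtain ⟨N, hN⟩ := hat.2 1
  have hlne : l ≠ [] := by rintro rfl; exact hc (by simpa using hlp.symm)
  have hlen : 1 ≤ (l ++ m).length := by
    have := List.length_pos_iff.mpr hlne
    simp only [List.length_append]; omega
  set L := (List.replicate (N + 1) (l ++ m)).flatten with hL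
  have hLatoms : ∀ x ∈ L, IsAtomElt x := by
    intro x hx
    rw [hL, List.mem_flatten] at hx
    obtain ⟨t, ht, hxt⟩ := hx
    rw [List.mem_replicate] at ht
    rw [ht.2] at hxt
    rcases List.mem_append.mp hxt with h' | h'
    · exact hl x h'
    · exact hm x h'
  have hLprod : L.prod = 1 := by
    rw [hL, List.prod_flatten, List.map_replicate, List.prod_append, hlp, hmp, h,
      List.prod_replicate, one_pow]
  have hLlen : L.length = (N + 1) * (l ++ m).length := by
    rw [hL, List.length_flatten, List.map_replicate, List.sum_replicate, smul_eq_mul]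
  have := hN L hLatoms hLprod
  rw [hLlen] at this
  nlinarith

lemma dvdL_antisymm' {M : Type*} [Monoid M]
    (hcan : ∀ a b c : M, a * b = a * c → b = c) (hat : Atomic M)
    {a b : M} (h1 : dvdL a b) (h2 : dvdL b a) : a = b := by
  obtain ⟨c, hc⟩ := h1
  obtain ⟨d, hd⟩ := h2
  have h : a * (c * d) = a * 1 := by rw [← mul_assoc, hc, hd, mul_one]
  have h' := eq_one_of_mul_eq_one_atomic hat (hcan _ _ _ h)
  rw [← hc, h', mul_one]

lemma isGarsideElt_map {M N : Type*} [Monoid M] [Monoid N] (f : M →* N) (g : N →* M)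
    (hfg : ∀ x, f (g x) = x) (hgf : ∀ x, g (f x) = x) {Δ : M} (hΔ : IsGarsideElt Δ) :
    IsGarsideElt (f Δ) := by
  have hL : Lset (f Δ) = f '' Lset Δ := by
    ext x
    constructor
    · rintro ⟨c, hc⟩
      refine ⟨g x, ⟨g c, ?_⟩, hfg x⟩
      rw [← map_mul, hc, hgf]
    · rintro ⟨t, ⟨c, hc⟩, rfl⟩
      exact ⟨f c, by rw [← map_mul, hc]⟩
  have hR : Rset (f Δ) = f '' Rset Δ := by
    ext x
    constructor
    · rintro ⟨c, hc⟩
      refine ⟨g x, ⟨g c, ?_⟩, hfg x⟩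
      rw [← map_mul, hc, hgf]
    · rintro ⟨t, ⟨c, hc⟩, rfl⟩
      exact ⟨f c, by rw [← map_mul, hc]⟩
  refine ⟨by rw [hL, hR, hΔ.1], ?_⟩
  rw [hL, ← MonoidHom.map_mclosure, hΔ.2]
  rw [Submonoid.eq_top_iff']
  intro x
  exact ⟨g x, trivial, hfg x⟩

namespace SDP

variable {G H : Type*} [Group G] [Group H] {ρ : RightAction G H}

lemma ext' {p q : SDP ρ} (hg : p.g = q.g) (hh : p.h = q.h) : p = q := by
  cases p; cases q; cases hg; cases hh; rfl

@[simp] lemma inv_g (p : SDP ρ) : (p⁻¹).g = p.g⁻¹ := rfl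
@[simp] lemma inv_h (p : SDP ρ) : (p⁻¹).h = ρ.act p.g⁻¹ p.h⁻¹ := rfl

end SDP

end Aux

section Homs

variable {G H : Type*} [Group G] [Group H] {ρ : RightAction G H}

@[simp] lemma SDP.mk_g (x : G) (u : H) : (SDP.mk (ρ := ρ) x u).g = x := rfl
@[simp] lemma SDP.mk_h (x : G) (u : H) : (SDP.mk (ρ := ρ) x u).h = u := rfl

/-- The embedding `G⁺ → G⁺ ⋉ H⁺`. -/
def sdpφ (PG : Submonoid G) (PH : Submonoid H) (P : Submonoid (SDP ρ))
    (hP : ∀ p : SDP ρ, p ∈ P ↔ p.g ∈ PG ∧ p.h ∈ PH) : PG →* P where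
  toFun x := ⟨SDP.mk x 1, (hP _).mpr ⟨x.2, one_mem PH⟩⟩
  map_one' := by
    apply Subtype.ext
    apply SDP.ext' <;> rfl
  map_mul' x y := by
    apply Subtype.ext
    apply SDP.ext'
    · rfl
    · show (1 : H) = ρ.act (y : G) 1 * 1
      rw [ρ.act_one', mul_one]

@[simp] lemma sdpφ_coe (PG : Submonoid G) (PH : Submonoid H) (P : Submonoid (SDP ρ))
    (hP : ∀ p : SDP ρ, p ∈ P ↔ p.g ∈ PG ∧ p.h ∈ PH) (x : PG) :
    ((sdpφ PG PH P hP x : P) : SDP ρ) = SDP.mk (x : G) 1 := rfl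

/-- The embedding `H⁺ → G⁺ ⋉ H⁺`. -/
def sdpψ (PG : Submonoid G) (PH : Submonoid H) (P : Submonoid (SDP ρ))
    (hP : ∀ p : SDP ρ, p ∈ P ↔ p.g ∈ PG ∧ p.h ∈ PH) : PH →* P where
  toFun u := ⟨SDP.mk 1 u, (hP _).mpr ⟨one_mem PG, u.2⟩⟩
  map_one' := by
    apply Subtype.ext
    apply SDP.ext' <;> rfl
  map_mul' u v := by
    apply Subtype.ext
    apply SDP.ext'
    · exact (one_mul _).symm
    · show ((u : H) * v : H) = ρ.act (1 : G) u * v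
      rw [ρ.act_one]

@[simp] lemma sdpψ_coe (PG : Submonoid G) (PH : Submonoid H) (P : Submonoid (SDP ρ))
    (hP : ∀ p : SDP ρ, p ∈ P ↔ p.g ∈ PG ∧ p.h ∈ PH) (u : PH) :
    ((sdpψ PG PH P hP u : P) : SDP ρ) = SDP.mk 1 (u : H) := rfl

/-- The projection `G⁺ ⋉ H⁺ → G⁺`. -/
def sdpπ (PG : Submonoid G) (PH : Submonoid H) (P : Submonoid (SDP ρ))
    (hP : ∀ p : SDP ρ, p ∈ P ↔ p.g ∈ PG ∧ p.h ∈ PH) : P →* PG where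
  toFun p := ⟨(p : SDP ρ).g, ((hP _).mp p.2).1⟩
  map_one' := rfl
  map_mul' p q := rfl

@[simp] lemma sdpπ_coe (PG : Submonoid G) (PH : Submonoid H) (P : Submonoid (SDP ρ))
    (hP : ∀ p : SDP ρ, p ∈ P ↔ p.g ∈ PG ∧ p.h ∈ PH) (p : P) :
    ((sdpπ PG PH P hP p : PG) : G) = (p : SDP ρ).g := rfl

/-- The action of `y : G` as a monoid endomorphism of `H⁺`. -/
def actHomPH (ρ : RightAction G H) (PH : Submonoid H)
    (hact : ∀ x : G, ρ.act x '' (PH : Set H) = (PH : Set H)) (y : G) : PH →* PH where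
  toFun u := ⟨ρ.act y u, by
    have h : ρ.act y (u : H) ∈ ρ.act y '' (PH : Set H) := ⟨u, u.2, rfl⟩
    rwa [hact y] at h⟩
  map_one' := Subtype.ext (ρ.act_one' y)
  map_mul' u v := Subtype.ext (ρ.act_mul y u v)

@[simp] lemma actHomPH_coe (ρ : RightAction G H) (PH : Submonoid H)
    (hact : ∀ x : G, ρ.act x '' (PH : Set H) = (PH : Set H)) (y : G) (u : PH) :
    ((actHomPH ρ PH hact y u : PH) : H) = ρ.act y (u : H) := rfl

end Homs
/-- **Lemma 4.5.** If `Δ_G` and `Δ_H` are the minimal Garside elements of `G⁺` and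
`H⁺` respectively, then `(Δ_G, Δ_H)` is the minimal Garside element of `G⁺ ⋉ H⁺`. -/
theorem sdp_minimal_garside_elt {G H : Type*} [Group G] [Group H] (ρ : RightAction G H)
    (PG : Submonoid G) (PH : Submonoid H) (ΔG : G) (ΔH : H)
    (hG : IsGarsideGroup PG ΔG) (hH : IsGarsideGroup PH ΔH)
    (hact : ∀ x : G, ρ.act x '' (PH : Set H) = (PH : Set H))
    (hΔG : ΔG ∈ PG) (hΔH : ΔH ∈ PH)
    (hGelt : IsGarsideElt (⟨ΔG, hΔG⟩ : PG))
    (hGmin : ∀ Δ' : PG, IsGarsideElt Δ' →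
      dvdL (⟨ΔG, hΔG⟩ : PG) Δ' ∧ dvdR (⟨ΔG, hΔG⟩ : PG) Δ')
    (hHelt : IsGarsideElt (⟨ΔH, hΔH⟩ : PH))
    (hHmin : ∀ Δ'' : PH, IsGarsideElt Δ'' →
      dvdL (⟨ΔH, hΔH⟩ : PH) Δ'' ∧ dvdR (⟨ΔH, hΔH⟩ : PH) Δ'')
    (P : Submonoid (SDP ρ))
    (hP : ∀ p : SDP ρ, p ∈ P ↔ p.g ∈ PG ∧ p.h ∈ PH) :
    IsGarsideElt (⟨SDP.mk ΔG ΔH, (hP (SDP.mk ΔG ΔH)).mpr ⟨hΔG, hΔH⟩⟩ : P) ∧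
    ∀ D' : P, IsGarsideElt D' →
      dvdL (⟨SDP.mk ΔG ΔH, (hP (SDP.mk ΔG ΔH)).mpr ⟨hΔG, hΔH⟩⟩ : P) D' ∧
      dvdR (⟨SDP.mk ΔG ΔH, (hP (SDP.mk ΔG ΔH)).mpr ⟨hΔG, hΔH⟩⟩ : P) D' := by
  -- Basic facts about the action
  have hact_mem : ∀ (x : G) {u : H}, u ∈ PH → ρ.act x u ∈ PH := by
    intro x u hu
    have : ρ.act x u ∈ ρ.act x '' (PH : Set H) := ⟨u, hu, rfl⟩
    rwa [hact x] at this
  have hact_ic : ∀ (x : G) (u : H), ρ.act x⁻¹ (ρ.act x u) = u := by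
    intro x u; rw [← ρ.act_comp, mul_inv_cancel, ρ.act_one]
  have hact_ci : ∀ (x : G) (u : H), ρ.act x (ρ.act x⁻¹ u) = u := by
    intro x u; rw [← ρ.act_comp, inv_mul_cancel, ρ.act_one]
  have hact_mem_iff : ∀ (x : G) (u : H), ρ.act x u ∈ PH ↔ u ∈ PH := by
    intro x u
    constructor
    · intro h
      have := hact_mem x⁻¹ h
      rwa [hact_ic] at this
    · exact hact_mem x
  have hact_inv : ∀ (x : G) (u : H), ρ.act x u⁻¹ = (ρ.act x u)⁻¹ := by
    intro x u
    have h := ρ.act_mul x u⁻¹ u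
    rw [inv_mul_cancel, ρ.act_one'] at h
    exact eq_inv_of_mul_eq_one_left h.symm
  -- Divisibility characterizations in the semidirect product
  have hdvdL : ∀ p q : P, dvdL p q ↔
      ((p : SDP ρ).g⁻¹ * (q : SDP ρ).g ∈ PG ∧
       ρ.act ((p : SDP ρ).g⁻¹ * (q : SDP ρ).g) (p : SDP ρ).h⁻¹ * (q : SDP ρ).h ∈ PH) := by
    intro p q
    have e1 : ((p : SDP ρ)⁻¹ * (q : SDP ρ)).g = (p : SDP ρ).g⁻¹ * (q : SDP ρ).g := rfl
    have e2 : ((p : SDP ρ)⁻¹ * (q : SDP ρ)).h =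
        ρ.act ((p : SDP ρ).g⁻¹ * (q : SDP ρ).g) (p : SDP ρ).h⁻¹ * (q : SDP ρ).h := by
      simp only [SDP.mul_h, SDP.inv_h, SDP.inv_g, ρ.act_comp]
    rw [dvdL_subtype_iff P p q, hP, e1, e2]
  have hdvdR : ∀ p q : P, dvdR p q ↔
      ((q : SDP ρ).g * (p : SDP ρ).g⁻¹ ∈ PG ∧
       (q : SDP ρ).h * (p : SDP ρ).h⁻¹ ∈ PH) := by
    intro p q
    have e1 : ((q : SDP ρ) * (p : SDP ρ)⁻¹).g = (q : SDP ρ).g * (p : SDP ρ).g⁻¹ := rfl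
    have e2 : ((q : SDP ρ) * (p : SDP ρ)⁻¹).h =
        ρ.act (p : SDP ρ).g⁻¹ ((q : SDP ρ).h * (p : SDP ρ).h⁻¹) := by
      simp only [SDP.mul_h, SDP.inv_h, SDP.inv_g, ρ.act_mul]
    rw [dvdR_subtype_iff P p q, hP, e1, e2, hact_mem_iff]
  -- The action fixes ΔH
  have actHom_comp : ∀ (y : G) (u : PH),
      actHomPH ρ PH hact y⁻¹ (actHomPH ρ PH hact y u) = u := by
    intro y u; exact Subtype.ext (hact_ic y u)
  have actHom_comp' : ∀ (y : G) (u : PH),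
      actHomPH ρ PH hact y (actHomPH ρ PH hact y⁻¹ u) = u := by
    intro y u; exact Subtype.ext (hact_ci y u)
  have hHcan : ∀ a b c : PH, a * b = a * c → b = c := hH.1.2.1
  have hHatomic : Atomic PH := hH.1.2.2.2.1
  have actΔH : ∀ y : G, ρ.act y ΔH = ΔH := by
    intro y
    have hGar : IsGarsideElt (actHomPH ρ PH hact y ⟨ΔH, hΔH⟩) :=
      isGarsideElt_map (actHomPH ρ PH hact y) (actHomPH ρ PH hact y⁻¹)
        (actHom_comp' y) (actHom_comp y) hHelt
    have hGar' : IsGarsideElt (actHomPH ρ PH hact y⁻¹ ⟨ΔH, hΔH⟩) :=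
      isGarsideElt_map (actHomPH ρ PH hact y⁻¹) (actHomPH ρ PH hact y)
        (actHom_comp y) (actHom_comp' y) hHelt
    have h1 : dvdL (⟨ΔH, hΔH⟩ : PH) (actHomPH ρ PH hact y ⟨ΔH, hΔH⟩) := (hHmin _ hGar).1
    have h2 : dvdL (⟨ΔH, hΔH⟩ : PH) (actHomPH ρ PH hact y⁻¹ ⟨ΔH, hΔH⟩) := (hHmin _ hGar').1
    have h2' : dvdL (actHomPH ρ PH hact y ⟨ΔH, hΔH⟩) (⟨ΔH, hΔH⟩ : PH) := by
      obtain ⟨c, hc⟩ := h2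
      refine ⟨actHomPH ρ PH hact y c, ?_⟩
      rw [← map_mul, hc, actHom_comp']
    have h3 := dvdL_antisymm' hHcan hHatomic h1 h2'
    exact congrArg Subtype.val h3.symm
  -- characterizations in PG / PH for the chosen Garside elements
  have hGLR : ∀ x : G, x ∈ PG → (x⁻¹ * ΔG ∈ PG ↔ ΔG * x⁻¹ ∈ PG) := by
    intro x hx
    have h := Set.ext_iff.mp hGelt.1 ⟨x, hx⟩
    simp only [Lset, Rset, Set.mem_setOf_eq, dvdL_subtype_iff, dvdR_subtype_iff] at h
    exact h
  have hHLR : ∀ u : H, u ∈ PH → (u⁻¹ * ΔH ∈ PH ↔ ΔH * u⁻¹ ∈ PH) := by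
    intro u hu
    have h := Set.ext_iff.mp hHelt.1 ⟨u, hu⟩
    simp only [Lset, Rset, Set.mem_setOf_eq, dvdL_subtype_iff, dvdR_subtype_iff] at h
    exact h
  constructor
  · -- (ΔG, ΔH) is a Garside element of G⁺ ⋉ H⁺
    constructor
    · -- Lset = Rset
      ext p
      simp only [Lset, Rset, Set.mem_setOf_eq, hdvdL, hdvdR, SDP.mk_g, SDP.mk_h]
      have hpg : (p : SDP ρ).g ∈ PG := ((hP _).mp p.2).1
      have hph : (p : SDP ρ).h ∈ PH := ((hP _).mp p.2).2
      have e : ρ.act ((p : SDP ρ).g⁻¹ * ΔG) (p : SDP ρ).h⁻¹ * ΔH =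
          ρ.act ((p : SDP ρ).g⁻¹ * ΔG) ((p : SDP ρ).h⁻¹ * ΔH) := by
        rw [ρ.act_mul, actΔH]
      rw [e, hact_mem_iff]
      constructor
      · rintro ⟨h1, h2⟩
        exact ⟨(hGLR _ hpg).mp h1, (hHLR _ hph).mp h2⟩
      · rintro ⟨h1, h2⟩
        exact ⟨(hGLR _ hpg).mpr h1, (hHLR _ hph).mpr h2⟩
    · -- Lset generates
      rw [Submonoid.eq_top_iff']
      intro p
      have hpg : (p : SDP ρ).g ∈ PG := ((hP _).mp p.2).1
      have hph : (p : SDP ρ).h ∈ PH := ((hP _).mp p.2).2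
      have hdecomp : p = sdpφ PG PH P hP ⟨(p : SDP ρ).g, hpg⟩ *
          sdpψ PG PH P hP ⟨(p : SDP ρ).h, hph⟩ := by
        refine Subtype.ext (SDP.ext' ?_ ?_).symm
        · show (p : SDP ρ).g * 1 = (p : SDP ρ).g
          rw [mul_one]
        · show ρ.act (1 : G) 1 * (p : SDP ρ).h = (p : SDP ρ).h
          rw [ρ.act_one, one_mul]
      rw [hdecomp]
      have hsubφ : (⇑(sdpφ PG PH P hP) ''
          Lset (⟨ΔG, hΔG⟩ : PG)) ⊆ Lset (⟨SDP.mk ΔG ΔH, (hP _).mpr ⟨hΔG, hΔH⟩⟩ : P) := by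
        rintro _ ⟨x, hx, rfl⟩
        have hx' : (x : G)⁻¹ * ΔG ∈ PG := (dvdL_subtype_iff PG x ⟨ΔG, hΔG⟩).mp hx
        show dvdL _ _
        rw [hdvdL]
        simp only [sdpφ_coe, SDP.mk_g, SDP.mk_h]
        refine ⟨hx', ?_⟩
        rw [inv_one, ρ.act_one', one_mul]
        exact hΔH
      have hsubψ : (⇑(sdpψ PG PH P hP) ''
          Lset (⟨ΔH, hΔH⟩ : PH)) ⊆ Lset (⟨SDP.mk ΔG ΔH, (hP _).mpr ⟨hΔG, hΔH⟩⟩ : P) := by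
        rintro _ ⟨u, hu, rfl⟩
        have hu' : (u : H)⁻¹ * ΔH ∈ PH := (dvdL_subtype_iff PH u ⟨ΔH, hΔH⟩).mp hu
        show dvdL _ _
        rw [hdvdL]
        simp only [sdpψ_coe, SDP.mk_g, SDP.mk_h]
        refine ⟨by rw [inv_one, one_mul]; exact hΔG, ?_⟩
        rw [inv_one, one_mul]
        have e : ρ.act ΔG (u : H)⁻¹ * ΔH = ρ.act ΔG ((u : H)⁻¹ * ΔH) := by
          rw [ρ.act_mul, actΔH]
        rw [e, hact_mem_iff]
        exact hu'
      refine mul_mem ?_ ?_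
      · have h1 : (⟨(p : SDP ρ).g, hpg⟩ : PG) ∈ Submonoid.closure (Lset (⟨ΔG, hΔG⟩ : PG)) := by
          rw [hGelt.2]; trivial
        have h2 := Submonoid.mem_map_of_mem (sdpφ PG PH P hP) h1
        rw [MonoidHom.map_mclosure] at h2
        exact Submonoid.closure_mono hsubφ h2
      · have h1 : (⟨(p : SDP ρ).h, hph⟩ : PH) ∈ Submonoid.closure (Lset (⟨ΔH, hΔH⟩ : PH)) := by
          rw [hHelt.2]; trivial
        have h2 := Submonoid.mem_map_of_mem (sdpψ PG PH P hP) h1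
        rw [MonoidHom.map_mclosure] at h2
        exact Submonoid.closure_mono hsubψ h2
  · -- minimality
    intro D' hD'
    set a : G := (D' : SDP ρ).g with ha'
    set b : H := (D' : SDP ρ).h with hb'
    have ha : a ∈ PG := ((hP _).mp D'.2).1
    have hb : b ∈ PH := ((hP _).mp D'.2).2
    -- the key consequence of Lset D' = Rset D'
    have star : ∀ x : G, x ∈ PG → ∀ u : H, u ∈ PH →
        ((x⁻¹ * a ∈ PG ∧ ρ.act (x⁻¹ * a) u⁻¹ * b ∈ PH) ↔ (a * x⁻¹ ∈ PG ∧ b * u⁻¹ ∈ PH)) := by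
      intro x hx u hu
      have h := Set.ext_iff.mp hD'.1 ⟨SDP.mk x u, (hP _).mpr ⟨hx, hu⟩⟩
      simp only [Lset, Rset, Set.mem_setOf_eq] at h
      rw [hdvdL, hdvdR] at h
      exact h
    have haLR : ∀ x : G, x ∈ PG → (x⁻¹ * a ∈ PG ↔ a * x⁻¹ ∈ PG) := by
      intro x hx
      have h := star x hx 1 (one_mem PH)
      rw [inv_one, ρ.act_one', one_mul, mul_one] at h
      constructor
      · intro h1; exact (h.mp ⟨h1, hb⟩).1
      · intro h1; exact (h.mpr ⟨h1, hb⟩).1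
    have hbLR : ∀ u : H, u ∈ PH → (u⁻¹ * b ∈ PH ↔ b * u⁻¹ ∈ PH) := by
      intro u hu
      have h := star a ha u hu
      rw [inv_mul_cancel, mul_inv_cancel, ρ.act_one] at h
      constructor
      · intro h1; exact (h.mp ⟨one_mem PG, h1⟩).2
      · intro h1; exact (h.mpr ⟨one_mem PG, h1⟩).2
    -- stability of left divisors of b under the action of right divisors of a
    have stab₀ : ∀ y : G, y ∈ PG → a * y⁻¹ ∈ PG → ∀ u : H, u ∈ PH →
        ((ρ.act y u)⁻¹ * b ∈ PH ↔ u⁻¹ * b ∈ PH) := by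
      intro y hy hay u hu
      have h := star (a * y⁻¹) hay u hu
      have e1 : (a * y⁻¹)⁻¹ * a = y := by group
      rw [e1] at h
      have h2 : a * (a * y⁻¹)⁻¹ ∈ PG := (haLR _ hay).mp (by rw [e1]; exact hy)
      have h3 : ρ.act y u⁻¹ * b ∈ PH ↔ b * u⁻¹ ∈ PH :=
        ⟨fun w => (h.mp ⟨hy, w⟩).2, fun w => (h.mpr ⟨h2, w⟩).2⟩
      rw [hact_inv] at h3
      exact h3.trans (hbLR u hu).symm
    -- a is a Garside element of PG
    have haTop : ∀ x : PG, x ∈ Submonoid.closure (Lset (⟨a, ha⟩ : PG)) := by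
      intro x
      have h1 : sdpφ PG PH P hP x ∈ Submonoid.closure (Lset D') := by rw [hD'.2]; trivial
      have h2 := Submonoid.mem_map_of_mem (sdpπ PG PH P hP) h1
      rw [MonoidHom.map_mclosure] at h2
      have h3 : sdpπ PG PH P hP (sdpφ PG PH P hP x) = x := Subtype.ext rfl
      rw [h3] at h2
      refine Submonoid.closure_mono ?_ h2
      rintro _ ⟨p, hp, rfl⟩
      obtain ⟨c, hc⟩ := hp
      refine ⟨sdpπ PG PH P hP c, ?_⟩
      rw [← map_mul, hc]
      exact Subtype.ext rfl
    have haGar : IsGarsideElt (⟨a, ha⟩ : PG) := by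
      constructor
      · ext x
        simp only [Lset, Rset, Set.mem_setOf_eq, dvdL_subtype_iff, dvdR_subtype_iff]
        exact haLR x x.2
      · rw [Submonoid.eq_top_iff']; exact haTop
    -- full stability
    have stabZ : ∀ y : PG, ∀ u : H, u ∈ PH →
        ((ρ.act (y : G) u)⁻¹ * b ∈ PH ↔ u⁻¹ * b ∈ PH) := by
      have hZ : Submonoid.closure (Lset (⟨a, ha⟩ : PG)) ≤
          { carrier := {y : PG | ∀ u : H, u ∈ PH →
              ((ρ.act (y : G) u)⁻¹ * b ∈ PH ↔ u⁻¹ * b ∈ PH)}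
            one_mem' := by
              intro u hu
              rw [OneMemClass.coe_one, ρ.act_one]
            mul_mem' := by
              intro y z hy hz u hu
              rw [Submonoid.coe_mul, ρ.act_comp]
              exact (hz (ρ.act y u) (hact_mem _ hu)).trans (hy u hu) } := by
        rw [Submonoid.closure_le]
        intro x hx
        have hx' : (x : G)⁻¹ * a ∈ PG := (dvdL_subtype_iff PG x ⟨a, ha⟩).mp hx
        exact stab₀ (x : G) x.2 ((haLR _ x.2).mp hx')
      intro y
      exact hZ (haTop y)
    -- b is a Garside element of PH
    have hbLset : ∀ u : PH, u ∈ Lset (⟨b, hb⟩ : PH) ↔ (u : H)⁻¹ * b ∈ PH := by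
      intro u
      simp only [Lset, Set.mem_setOf_eq, dvdL_subtype_iff]
    have actClosure : ∀ x : G, x ∈ PG → ∀ u : PH,
        u ∈ Submonoid.closure (Lset (⟨b, hb⟩ : PH)) →
        (⟨ρ.act x u, hact_mem x u.2⟩ : PH) ∈ Submonoid.closure (Lset (⟨b, hb⟩ : PH)) := by
      intro x hx u hu
      induction hu using Submonoid.closure_induction with
      | mem t ht =>
        refine Submonoid.subset_closure ?_
        rw [hbLset] at ht ⊢
        exact (stabZ ⟨x, hx⟩ t t.2).mpr ht
      | one =>
        have e : (⟨ρ.act x ((1 : PH) : H), hact_mem x (1 : PH).2⟩ : PH) = 1 :=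
          Subtype.ext (ρ.act_one' x)
        rw [e]
        exact one_mem _
      | mul s t hs ht ihs iht =>
        have e : (⟨ρ.act x ((s * t : PH) : H), hact_mem x (s * t).2⟩ : PH) =
            (⟨ρ.act x s, hact_mem x s.2⟩ : PH) * ⟨ρ.act x t, hact_mem x t.2⟩ := by
          refine Subtype.ext ?_
          show ρ.act x ((s : H) * t) = ρ.act x s * ρ.act x t
          exact ρ.act_mul x s t
        rw [e]
        exact mul_mem ihs iht
    have hbTop : ∀ u : PH, u ∈ Submonoid.closure (Lset (⟨b, hb⟩ : PH)) := by
      have hC : Submonoid.closure (Lset D') ≤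
          { carrier := {p : P | ∀ pf : (p : SDP ρ).h ∈ PH,
              (⟨(p : SDP ρ).h, pf⟩ : PH) ∈ Submonoid.closure (Lset (⟨b, hb⟩ : PH))}
            one_mem' := by
              intro pf
              have e : (⟨((1 : P) : SDP ρ).h, pf⟩ : PH) = 1 := Subtype.ext rfl
              rw [e]
              exact one_mem _
            mul_mem' := by
              intro p q hp hq pf
              have hqg : (q : SDP ρ).g ∈ PG := ((hP _).mp q.2).1
              have hph : (p : SDP ρ).h ∈ PH := ((hP _).mp p.2).2
              have hqh : (q : SDP ρ).h ∈ PH := ((hP _).mp q.2).2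
              have e : (⟨((p * q : P) : SDP ρ).h, pf⟩ : PH) =
                  (⟨ρ.act (q : SDP ρ).g (p : SDP ρ).h,
                    hact_mem _ hph⟩ : PH) * ⟨(q : SDP ρ).h, hqh⟩ :=
                Subtype.ext rfl
              rw [e]
              exact mul_mem (actClosure _ hqg ⟨(p : SDP ρ).h, hph⟩ (hp hph)) (hq hqh) } := by
        rw [Submonoid.closure_le]
        intro p hp
        have hp' := (hdvdL p D').mp hp
        intro pf
        have hph : (p : SDP ρ).h ∈ PH := pf
        have h1 : (ρ.act ((p : SDP ρ).g⁻¹ * a) (p : SDP ρ).h)⁻¹ * b ∈ PH := by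
          rw [← hact_inv]
          exact hp'.2
        have h2 : ((p : SDP ρ).h)⁻¹ * b ∈ PH :=
          (stabZ ⟨(p : SDP ρ).g⁻¹ * a, hp'.1⟩ _ hph).mp h1
        exact Submonoid.subset_closure ((hbLset ⟨(p : SDP ρ).h, pf⟩).mpr h2)
      intro u
      have h1 : sdpψ PG PH P hP u ∈ Submonoid.closure (Lset D') := by rw [hD'.2]; trivial
      have hcoe : ((sdpψ PG PH P hP u : P) : SDP ρ).h ∈ PH := u.2
      have h2 := hC h1 hcoe
      have e : (⟨((sdpψ PG PH P hP u : P) : SDP ρ).h, hcoe⟩ : PH) = u := Subtype.ext rfl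
      rwa [e] at h2
    have hbGar : IsGarsideElt (⟨b, hb⟩ : PH) := by
      constructor
      · ext u
        simp only [Lset, Rset, Set.mem_setOf_eq, dvdL_subtype_iff, dvdR_subtype_iff]
        exact hbLR u u.2
      · rw [Submonoid.eq_top_iff']; exact hbTop
    -- conclude
    obtain ⟨hGdL, hGdR⟩ := hGmin ⟨a, ha⟩ haGar
    obtain ⟨hHdL, hHdR⟩ := hHmin ⟨b, hb⟩ hbGar
    have hGdL' : ΔG⁻¹ * a ∈ PG := (dvdL_subtype_iff PG _ _).mp hGdL
    have hGdR' : a * ΔG⁻¹ ∈ PG := (dvdR_subtype_iff PG _ _).mp hGdR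
    have hHdL' : ΔH⁻¹ * b ∈ PH := (dvdL_subtype_iff PH _ _).mp hHdL
    have hHdR' : b * ΔH⁻¹ ∈ PH := (dvdR_subtype_iff PH _ _).mp hHdR
    constructor
    · rw [hdvdL]
      simp only [SDP.mk_g, SDP.mk_h]
      refine ⟨hGdL', ?_⟩
      rw [hact_inv]
      exact (stabZ ⟨ΔG⁻¹ * a, hGdL'⟩ ΔH hΔH).mpr hHdL'
    · rw [hdvdR]
      simp only [SDP.mk_g, SDP.mk_h]
      exact ⟨hGdR', hHdR'⟩
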